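/- arXiv:2404.14439 — 3 statements merged into one kernel-verified Lean document; each statement's English description precedes it below -/
import Mathlib

section
/- The statistics rob_B and rcs_B are equidistributed over ordered type B partitions of ⟨n⟩ with 2k+1 blocks: the complement map π ↦ π^c satisfies rcs_B(π^c) = rob_B(π) for every ordered type B partition π. -/
open Finset Polynomial

/-- The ground set ⟨n⟩ = {-n, ..., -1, 0, 1, ..., n}. -/
noncomputable def angleB (n : ℕ) : Finset ℤ := Finset.Icc (-(n : ℤ)) (n : ℤ)

/-- An ordered type B (signed) partition of ⟨n⟩ with 2k+1 blocks:
pairwise disjoint nonempty blocks covering ⟨n⟩, with 0 ∈ S₀, S₀ closed under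
negation, and S_{2i} = -S_{2i-1} for i ≥ 1. -/
def IsOrderedB (n k : ℕ) (S : Fin (2*k+1) → Finset ℤ) : Prop :=
  (∀ i, (S i).Nonempty) ∧
  (∀ i j, i ≠ j → Disjoint (S i) (S j)) ∧
  (Finset.univ.biUnion S = angleB n) ∧
  ((0 : ℤ) ∈ S 0) ∧
  (∀ x ∈ S 0, -x ∈ S 0) ∧
  (∀ i : ℕ, 1 ≤ i → ∀ h : 2*i < 2*k+1,
    S ⟨2*i, h⟩ = (S ⟨2*i-1, by omega⟩).image (fun x => -x))

/-- m_j = min |S_j| (0 if the block is empty). -/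
def mB {m : ℕ} (S : Fin m → Finset ℤ) (j : Fin m) : ℤ :=
  WithTop.untopD 0 (((S j).image (fun x => |x|)).min)

/-- M_j = max |S_j| (0 if the block is empty). -/
def MB {m : ℕ} (S : Fin m → Finset ℤ) (j : Fin m) : ℤ :=
  WithBot.unbotD 0 (((S j).image (fun x => |x|)).max)

/-- A standard type B partition: ordered, with m_{2i} ∈ S_{2i} for i ≥ 1 and
0 = m₀ < m₂ < m₄ < ... < m_{2k}. -/
def IsStandardB (n k : ℕ) (S : Fin (2*k+1) → Finset ℤ) : Prop :=
  IsOrderedB n k S ∧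
  (∀ i : ℕ, 1 ≤ i → ∀ h : 2*i < 2*k+1, mB S ⟨2*i, h⟩ ∈ S ⟨2*i, h⟩) ∧
  (∀ i : ℕ, ∀ h : 2*(i+1) < 2*k+1, mB S ⟨2*i, by omega⟩ < mB S ⟨2*(i+1), h⟩)

/-- inv ρ: number of pairs (s, S_j) with s ∈ S_i for some i < j and s ≥ m_j. -/
noncomputable def invB {m : ℕ} (S : Fin m → Finset ℤ) : ℕ :=
  {p : ℤ × Fin m | (∃ i < p.2, p.1 ∈ S i) ∧ mB S p.2 ≤ p.1}.ncard

/-- ros_B = inv. -/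
noncomputable def rosB {m : ℕ} (S : Fin m → Finset ℤ) : ℕ := invB S

/-- los_{B'}: pairs (s, S_j) with s ∈ S_i for some i > j and s ≥ m_j. -/
noncomputable def losB' {m : ℕ} (S : Fin m → Finset ℤ) : ℕ :=
  {p : ℤ × Fin m | (∃ i, p.2 < i ∧ p.1 ∈ S i) ∧ mB S p.2 ≤ p.1}.ncard

/-- lob_{B'}: pairs (s, S_j) with s ∈ S_i for some i > j and 0 < s ≤ m_j. -/
noncomputable def lobB' {m : ℕ} (S : Fin m → Finset ℤ) : ℕ :=
  {p : ℤ × Fin m | (∃ i, p.2 < i ∧ p.1 ∈ S i) ∧ 0 < p.1 ∧ p.1 ≤ mB S p.2}.ncard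

/-- rcb_B: pairs (s, S_j) with s ∈ S_i for some i < j and 0 < s ≤ M_j. -/
noncomputable def rcbB {m : ℕ} (S : Fin m → Finset ℤ) : ℕ :=
  {p : ℤ × Fin m | (∃ i < p.2, p.1 ∈ S i) ∧ 0 < p.1 ∧ p.1 ≤ MB S p.2}.ncard

/-- rob_B: pairs (s, S_j) with s ∈ S_i for some i < j and 0 < s ≤ m_j. -/
noncomputable def robB {m : ℕ} (S : Fin m → Finset ℤ) : ℕ :=
  {p : ℤ × Fin m | (∃ i < p.2, p.1 ∈ S i) ∧ 0 < p.1 ∧ p.1 ≤ mB S p.2}.ncard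

/-- rcs_B: pairs (s, S_j) with s ∈ S_i for some i < j and s ≥ M_j. -/
noncomputable def rcsB {m : ℕ} (S : Fin m → Finset ℤ) : ℕ :=
  {p : ℤ × Fin m | (∃ i < p.2, p.1 ∈ S i) ∧ MB S p.2 ≤ p.1}.ncard

/-- Type B Stirling numbers of the second kind. -/
def StirB : ℕ → ℕ → ℕ
  | 0, 0 => 1
  | 0, _+1 => 0
  | n+1, 0 => StirB n 0
  | n+1, k+1 => StirB n k + (2*(k+1)+1) * StirB n (k+1)

/-- [m] = 1 + q + ... + q^{m-1}. -/
noncomputable def qb (m : ℕ) : Polynomial ℤ := ∑ i ∈ Finset.range m, (Polynomial.X : Polynomial ℤ) ^ i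

/-- Type B q-Stirling numbers of the second kind. -/
noncomputable def qStirB : ℕ → ℕ → Polynomial ℤ
  | 0, 0 => 1
  | 0, _+1 => 0
  | n+1, 0 => qStirB n 0
  | n+1, k+1 => qStirB n k + qb (2*(k+1)+1) * qStirB n (k+1)

/-- [2k]!! = [2k][2k-2]⋯[2]. -/
noncomputable def qdf : ℕ → Polynomial ℤ
  | 0 => 1
  | k+1 => qb (2*(k+1)) * qdf k

/-- The complement map on ⟨n⟩: i ↦ n+1-i for i > 0, -i ↦ -(n+1-i), 0 ↦ 0. -/
def complB (n : ℕ) (x : ℤ) : ℤ :=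
  if 0 < x then (n : ℤ) + 1 - x else if x < 0 then -((n : ℤ) + 1) - x else 0

/-- Complement of a partition, blockwise. -/
def complP (n : ℕ) {m : ℕ} (S : Fin m → Finset ℤ) : Fin m → Finset ℤ :=
  fun j => (S j).image (complB n)

/-- The index of the block paired with block i: 0 ↦ 0, 2ℓ-1 ↦ 2ℓ, 2ℓ ↦ 2ℓ-1. -/
def pairIdx (k : ℕ) (i : Fin (2*k+1)) : Fin (2*k+1) :=
  if i.val = 0 then i
  else if h2 : i.val % 2 = 1 then ⟨i.val + 1, by omega⟩ else ⟨i.val - 1, by omega⟩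

lemma mB_spec {m : ℕ} (S : Fin m → Finset ℤ) (j : Fin m) (h : (S j).Nonempty) :
    (∃ x ∈ S j, |x| = mB S j) ∧ ∀ x ∈ S j, mB S j ≤ |x| := by
  have ht : ((S j).image (fun x => |x|)).Nonempty := h.image _
  have hmin : mB S j = ((S j).image (fun x => |x|)).min' ht := by
    unfold mB
    rw [← Finset.coe_min' ht, WithTop.untopD_coe]
  constructor
  · have := Finset.min'_mem _ ht
    rw [Finset.mem_image] at this
    obtain ⟨x, hx, hxe⟩ := this
    exact ⟨x, hx, by rw [hmin, hxe]⟩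
  · intro x hx
    rw [hmin]
    exact Finset.min'_le _ _ (Finset.mem_image_of_mem _ hx)

lemma MB_spec {m : ℕ} (S : Fin m → Finset ℤ) (j : Fin m) (h : (S j).Nonempty) :
    (∃ x ∈ S j, |x| = MB S j) ∧ ∀ x ∈ S j, |x| ≤ MB S j := by
  have ht : ((S j).image (fun x => |x|)).Nonempty := h.image _
  have hmax : MB S j = ((S j).image (fun x => |x|)).max' ht := by
    unfold MB
    rw [← Finset.coe_max' ht, WithBot.unbotD_coe]
  constructor
  · have := Finset.max'_mem _ ht
    rw [Finset.mem_image] at this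
    obtain ⟨x, hx, hxe⟩ := this
    exact ⟨x, hx, by rw [hmax, hxe]⟩
  · intro x hx
    rw [hmax]
    exact Finset.le_max' _ _ (Finset.mem_image_of_mem _ hx)

lemma complB_of_pos (n : ℕ) (x : ℤ) (h : 0 < x) : complB n x = (n : ℤ) + 1 - x := by
  unfold complB; rw [if_pos h]

lemma complB_of_neg (n : ℕ) (x : ℤ) (h : x < 0) : complB n x = -((n : ℤ) + 1) - x := by
  unfold complB; rw [if_neg (by omega), if_pos h]

lemma complB_abs (n : ℕ) (x : ℤ) (hx : |x| ≤ n) (hx0 : x ≠ 0) :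
    |complB n x| = (n : ℤ) + 1 - |x| := by
  rcases lt_trichotomy x 0 with h | h | h
  · rw [abs_of_neg h] at hx ⊢
    rw [complB_of_neg n x h, abs_of_neg (by omega)]
    ring
  · exact absurd h hx0
  · rw [abs_of_pos h] at hx ⊢
    rw [complB_of_pos n x h, abs_of_pos (by omega)]

lemma complB_pos_iff (n : ℕ) (x : ℤ) (hx : |x| ≤ n) : 0 < complB n x ↔ 0 < x := by
  rcases lt_trichotomy x 0 with h | h | h
  · rw [abs_of_neg h] at hx
    rw [complB_of_neg n x h]
    constructor <;> intro <;> omega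
  · subst h; simp [complB]
  · rw [abs_of_pos h] at hx
    rw [complB_of_pos n x h]
    constructor <;> intro <;> omega

lemma complB_invol (n : ℕ) (x : ℤ) (hx : |x| ≤ n) : complB n (complB n x) = x := by
  rcases lt_trichotomy x 0 with h | h | h
  · rw [abs_of_neg h] at hx
    rw [complB_of_neg n x h, complB_of_neg n _ (by omega)]
    ring
  · subst h; simp [complB]
  · rw [abs_of_pos h] at hx
    rw [complB_of_pos n x h, complB_of_pos n _ (by omega)]
    ring

/-- rcs_B(π^c) = rob_B(π) for every ordered type B partition π. -/
theorem stmt10 (n k : ℕ) (S : Fin (2*k+1) → Finset ℤ) (hS : IsOrderedB n k S) :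
    rcsB (complP n S) = robB S := by
  obtain ⟨hne, hdisj, hcover, h0, hsym, hpair⟩ := hS
  have hsub : ∀ j : Fin (2*k+1), ∀ x ∈ S j, |x| ≤ (n : ℤ) := by
    intro j x hx
    have : x ∈ angleB n := by
      rw [← hcover]
      exact Finset.mem_biUnion.mpr ⟨j, Finset.mem_univ j, hx⟩
    rw [angleB, Finset.mem_Icc] at this
    rw [abs_le]; exact this
  have hne0 : ∀ j : Fin (2*k+1), j ≠ 0 → ∀ x ∈ S j, x ≠ 0 := by
    intro j hj x hx h
    exact Finset.disjoint_left.mp (hdisj j 0 hj) (h ▸ hx) h0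
  have hmB_pos : ∀ j : Fin (2*k+1), j ≠ 0 → 1 ≤ mB S j := by
    intro j hj
    obtain ⟨x, hx, hxe⟩ := (mB_spec S j (hne j)).1
    have h1 : (1:ℤ) ≤ |x| := by
      have := hne0 j hj x hx
      rcases this.lt_or_gt with h | h
      · rw [abs_of_neg h]; omega
      · rw [abs_of_pos h]; omega
    omega
  have hmB_len : ∀ j : Fin (2*k+1), mB S j ≤ (n : ℤ) := by
    intro j
    obtain ⟨x, hx, hxe⟩ := (mB_spec S j (hne j)).1
    have := hsub j x hx
    omega
  have hMB : ∀ j : Fin (2*k+1), j ≠ 0 → MB (complP n S) j = (n : ℤ) + 1 - mB S j := by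
    intro j hj
    have hcne : (complP n S j).Nonempty := (hne j).image _
    obtain ⟨x0, hx0, hx0e⟩ := (mB_spec S j (hne j)).1
    refine le_antisymm ?_ ?_
    · obtain ⟨y, hy, hye⟩ := (MB_spec (complP n S) j hcne).1
      obtain ⟨x, hx, hxe⟩ := Finset.mem_image.mp hy
      have h1 := (mB_spec S j (hne j)).2 x hx
      have h2 : |complB n x| = (n : ℤ) + 1 - |x| :=
        complB_abs n x (hsub j x hx) (hne0 j hj x hx)
      rw [hxe, hye] at h2
      omega
    · have hmem : complB n x0 ∈ complP n S j := Finset.mem_image_of_mem _ hx0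
      have h3 := (MB_spec (complP n S) j hcne).2 _ hmem
      rw [complB_abs n x0 (hsub j x0 hx0) (hne0 j hj x0 hx0), hx0e] at h3
      exact h3
  have hjne : ∀ (i j : Fin (2*k+1)), i < j → j ≠ 0 := by
    intro i j hij h
    rw [h] at hij
    exact absurd hij (Fin.not_lt_zero i)
  set f : ℤ × Fin (2*k+1) → ℤ × Fin (2*k+1) := fun p => (complB n p.1, p.2) with hf
  set A : Set (ℤ × Fin (2*k+1)) :=
    {p | (∃ i < p.2, p.1 ∈ S i) ∧ 0 < p.1 ∧ p.1 ≤ mB S p.2} with hA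
  have himg : {p : ℤ × Fin (2*k+1) |
      (∃ i < p.2, p.1 ∈ complP n S i) ∧ MB (complP n S) p.2 ≤ p.1} = f '' A := by
    ext ⟨t, j⟩
    simp only [Set.mem_setOf_eq, Set.mem_image, hA, hf, Prod.mk.injEq, Prod.exists]
    constructor
    · rintro ⟨⟨i, hij, ht⟩, hM⟩
      have hj : j ≠ 0 := hjne i j hij
      obtain ⟨s, hs, hse⟩ := Finset.mem_image.mp ht
      rw [hMB j hj] at hM
      have hsn : |s| ≤ (n : ℤ) := hsub i s hs
      have htpos : 0 < t := by have := hmB_len j; omega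
      have hspos : 0 < s := (complB_pos_iff n s hsn).mp (hse ▸ htpos)
      have habs : complB n s = (n : ℤ) + 1 - s := complB_of_pos n s hspos
      exact ⟨s, j, ⟨⟨i, hij, hs⟩, hspos, by omega⟩, by rw [hse], rfl⟩
    · rintro ⟨s, j', ⟨⟨i, hij, hs⟩, hspos, hsle⟩, hse, hje⟩
      subst hje
      have hj : j' ≠ 0 := hjne i j' hij
      refine ⟨⟨i, hij, hse ▸ Finset.mem_image_of_mem _ hs⟩, ?_⟩
      rw [hMB j' hj, ← hse, complB_of_pos n s hspos]
      omega
  have hinj : Set.InjOn f A := by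
    rintro ⟨s, j⟩ ⟨⟨i, hij, hs⟩, _, _⟩ ⟨s', j'⟩ ⟨⟨i', hij', hs'⟩, _, _⟩ heq
    simp only [hf, Prod.mk.injEq] at heq
    obtain ⟨h1, h2⟩ := heq
    have hss : s = s' := by
      rw [← complB_invol n s (hsub i s hs), h1, complB_invol n s' (hsub i' s' hs')]
    simp [hss, h2]
  rw [rcsB, robB, himg, Set.ncard_image_of_injOn hinj]
end

section
/- Let f be the map on standard type B partitions of ⟨n⟩ with 2k+1 blocks that sends π to the standardization of its complement π^c. Then f is an involution (f² = id), hence a bijection of S_B(⟨n⟩,k). -/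
open Finset Polynomial

lemma mem_angleB {n : ℕ} {x : ℤ} : x ∈ angleB n ↔ -(n:ℤ) ≤ x ∧ x ≤ n := Finset.mem_Icc

lemma complB_zero (n : ℕ) : complB n 0 = 0 := by simp [complB]

lemma complB_neg (n : ℕ) (x : ℤ) : complB n (-x) = -complB n x := by
  simp only [complB]; split_ifs <;> omega

lemma complB_mem {n : ℕ} {x : ℤ} (h : x ∈ angleB n) : complB n x ∈ angleB n := by
  rw [mem_angleB] at *; simp only [complB]; split_ifs <;> omega

lemma complB_complB {n : ℕ} {x : ℤ} (h : x ∈ angleB n) : complB n (complB n x) = x := by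
  rw [mem_angleB] at h; simp only [complB]; split_ifs <;> omega

lemma abs_complB {n : ℕ} {x : ℤ} (h : x ∈ angleB n) (hx : x ≠ 0) :
    |complB n x| = (n:ℤ) + 1 - |x| := by
  rw [mem_angleB] at h
  rcases lt_trichotomy x 0 with h1 | h1 | h1
  · rw [abs_of_neg h1]; simp only [complB, if_neg (by omega : ¬ (0:ℤ) < x), if_pos h1]
    rw [abs_of_neg (by omega)]; ring
  · exact absurd h1 hx
  · rw [abs_of_pos h1]; simp only [complB, if_pos h1]
    rw [abs_of_pos (by omega)]

lemma complB_pos_eval {n : ℕ} {x : ℤ} (h1 : 0 < x) : complB n x = (n:ℤ) + 1 - x := by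
  simp only [complB, if_pos h1]

/-! min/max of absolute values -/

def amin (s : Finset ℤ) : ℤ := WithTop.untopD 0 ((s.image (fun x => |x|)).min)
def amax (s : Finset ℤ) : ℤ := WithBot.unbotD 0 ((s.image (fun x => |x|)).max)

lemma amin_eq (s : Finset ℤ) (hs : s.Nonempty) :
    amin s = (s.image (fun x => |x|)).min' (hs.image _) := by
  unfold amin; rw [← Finset.coe_min' ((hs.image _))]; rfl

lemma amax_eq (s : Finset ℤ) (hs : s.Nonempty) :
    amax s = (s.image (fun x => |x|)).max' (hs.image _) := by
  unfold amax; rw [← Finset.coe_max' ((hs.image _))]; rfl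

lemma amin_exists (s : Finset ℤ) (hs : s.Nonempty) : ∃ x ∈ s, |x| = amin s := by
  rw [amin_eq s hs]
  have := Finset.min'_mem (s.image (fun x => |x|)) (hs.image _)
  rw [Finset.mem_image] at this; obtain ⟨x, hx, hx2⟩ := this; exact ⟨x, hx, hx2⟩

lemma amax_exists (s : Finset ℤ) (hs : s.Nonempty) : ∃ x ∈ s, |x| = amax s := by
  rw [amax_eq s hs]
  have := Finset.max'_mem (s.image (fun x => |x|)) (hs.image _)
  rw [Finset.mem_image] at this; obtain ⟨x, hx, hx2⟩ := this; exact ⟨x, hx, hx2⟩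

lemma amin_le {s : Finset ℤ} {x : ℤ} (hx : x ∈ s) : amin s ≤ |x| := by
  rw [amin_eq s ⟨x, hx⟩]
  exact Finset.min'_le _ _ (Finset.mem_image_of_mem _ hx)

lemma le_amax {s : Finset ℤ} {x : ℤ} (hx : x ∈ s) : |x| ≤ amax s := by
  rw [amax_eq s ⟨x, hx⟩]
  exact Finset.le_max' _ _ (Finset.mem_image_of_mem _ hx)

lemma amin_zero_mem {s : Finset ℤ} (h : (0:ℤ) ∈ s) : amin s = 0 := by
  have h1 := amin_le h
  obtain ⟨x, _, hx2⟩ := amin_exists s ⟨0, h⟩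
  simp only [abs_zero] at h1
  have : (0:ℤ) ≤ |x| := abs_nonneg x
  omega

lemma neg_image_invol (s : Finset ℤ) : (s.image (fun x => -x)).image (fun x => -x) = s := by
  rw [Finset.image_image]; simp

lemma amin_neg_image (s : Finset ℤ) : amin (s.image (fun x => -x)) = amin s := by
  unfold amin; rw [Finset.image_image]
  have : ((fun x : ℤ => |x|) ∘ fun x => -x) = fun x : ℤ => |x| := by funext x; simp
  rw [this]

lemma amax_neg_image (s : Finset ℤ) : amax (s.image (fun x => -x)) = amax s := by
  unfold amax; rw [Finset.image_image]
  have : ((fun x : ℤ => |x|) ∘ fun x => -x) = fun x : ℤ => |x| := by funext x; simp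
  rw [this]

lemma amin_complB {n : ℕ} {s : Finset ℤ} (hs : s.Nonempty) (hsub : ∀ x ∈ s, x ∈ angleB n)
    (h0 : (0:ℤ) ∉ s) : amin (s.image (complB n)) = (n:ℤ) + 1 - amax s := by
  apply le_antisymm
  · obtain ⟨x, hx, hx2⟩ := amax_exists s hs
    have := amin_le (Finset.mem_image_of_mem (complB n) hx)
    rwa [abs_complB (hsub x hx) (by rintro rfl; exact h0 hx), hx2] at this
  · obtain ⟨y, hy, hy2⟩ := amin_exists _ (hs.image (complB n))
    rw [Finset.mem_image] at hy; obtain ⟨x, hx, rfl⟩ := hy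
    rw [abs_complB (hsub x hx) (by rintro rfl; exact h0 hx)] at hy2
    have := le_amax hx
    omega

lemma image_complB_neg_comm (n : ℕ) (s : Finset ℤ) :
    (s.image (fun x => -x)).image (complB n) = (s.image (complB n)).image (fun x => -x) := by
  rw [Finset.image_image, Finset.image_image]; congr 1; funext x
  simp [Function.comp, complB_neg]

lemma disjoint_image_complB {n : ℕ} {s t : Finset ℤ} (h : Disjoint s t)
    (hs : ∀ x ∈ s, x ∈ angleB n) (ht : ∀ x ∈ t, x ∈ angleB n) :
    Disjoint (s.image (complB n)) (t.image (complB n)) := by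
  rw [Finset.disjoint_left]
  intro z hz1 hz2
  rw [Finset.mem_image] at hz1 hz2
  obtain ⟨a, ha, rfl⟩ := hz1; obtain ⟨b, hb, hab⟩ := hz2
  have : a = b := by
    have h1 := complB_complB (hs a ha)
    have h2 := complB_complB (ht b hb)
    rw [← hab] at h1; rw [h1] at h2; exact h2
  exact Finset.disjoint_left.1 h ha (this ▸ hb)

section Struct
variable {n k : ℕ} {S : Fin (2*k+1) → Finset ℤ}

lemma mB_amin (j : Fin (2*k+1)) : mB S j = amin (S j) := rfl
lemma MB_amax (j : Fin (2*k+1)) : MB S j = amax (S j) := rfl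

lemma block_subset (hS : IsOrderedB n k S) (j : Fin (2*k+1)) : ∀ x ∈ S j, x ∈ angleB n := by
  intro x hx; rw [← hS.2.2.1]; exact Finset.mem_biUnion.mpr ⟨j, Finset.mem_univ j, hx⟩

lemma zero_not_mem_block (hS : IsOrderedB n k S) {j : Fin (2*k+1)} (hj : j ≠ 0) :
    (0:ℤ) ∉ S j :=
  fun h => Finset.disjoint_left.1 (hS.2.1 j 0 hj) h hS.2.2.2.1

lemma pair_even (hS : IsOrderedB n k S) {p : ℕ} (hp : p < k) :
    S ⟨2*p+2, by omega⟩ = (S ⟨2*p+1, by omega⟩).image (fun x => -x) := by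
  have h := hS.2.2.2.2.2 (p+1) (by omega) (by omega)
  have e1 : (⟨2*(p+1), by omega⟩ : Fin (2*k+1)) = ⟨2*p+2, by omega⟩ := by apply Fin.ext; simp only [Fin.val_mk]; omega
  have e2 : (⟨2*(p+1)-1, by omega⟩ : Fin (2*k+1)) = ⟨2*p+1, by omega⟩ := by apply Fin.ext; simp only [Fin.val_mk]; omega
  rw [e1, e2] at h; exact h

lemma pair_odd (hS : IsOrderedB n k S) {p : ℕ} (hp : p < k) :
    S ⟨2*p+1, by omega⟩ = (S ⟨2*p+2, by omega⟩).image (fun x => -x) := by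
  rw [pair_even hS hp, neg_image_invol]

lemma mB_zero (hS : IsOrderedB n k S) : mB S 0 = 0 :=
  amin_zero_mem hS.2.2.2.1

lemma fin_zero_eq : (0 : Fin (2*k+1)) = ⟨0, by omega⟩ := rfl

lemma mB_even_strictMono (hS : IsStandardB n k S) :
    StrictMono (fun i : Fin (k+1) => mB S ⟨2*i.val, by have := i.isLt; omega⟩) := by
  rw [Fin.strictMono_iff_lt_succ]
  intro i
  exact hS.2.2 i.val (by have := i.isLt; omega)

lemma mB_even_lt (hS : IsStandardB n k S) {i j : ℕ} (hij : i < j) (hj : 2*j < 2*k+1) :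
    mB S ⟨2*i, by omega⟩ < mB S ⟨2*j, hj⟩ := by
  have := mB_even_strictMono hS (a := ⟨i, by omega⟩) (b := ⟨j, by omega⟩) (by simp [Fin.lt_def]; omega)
  exact this

lemma mB_even_pos (hS : IsStandardB n k S) {i : ℕ} (h1 : 1 ≤ i) (h : 2*i < 2*k+1) :
    0 < mB S ⟨2*i, h⟩ := by
  have := mB_even_lt hS (i := 0) (j := i) h1 h
  have h0 : (⟨2*0, by omega⟩ : Fin (2*k+1)) = 0 := Fin.ext (by simp)
  rw [h0, mB_zero hS.1] at this; exact this

lemma mB_pair (hS : IsOrderedB n k S) {p : ℕ} (hp : p < k) :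
    mB S ⟨2*p+1, by omega⟩ = mB S ⟨2*p+2, by omega⟩ := by
  rw [mB_amin, mB_amin, pair_odd hS hp, amin_neg_image]

lemma MB_pair (hS : IsOrderedB n k S) {p : ℕ} (hp : p < k) :
    MB S ⟨2*p+1, by omega⟩ = MB S ⟨2*p+2, by omega⟩ := by
  rw [MB_amax, MB_amax, pair_odd hS hp, amax_neg_image]

lemma mB_mem_even' (hS : IsStandardB n k S) {p : ℕ} (hp : p < k) :
    mB S ⟨2*p+2, by omega⟩ ∈ S ⟨2*p+2, by omega⟩ := by
  have h := hS.2.1 (p+1) (by omega) (by omega)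
  have e1 : (⟨2*(p+1), by omega⟩ : Fin (2*k+1)) = ⟨2*p+2, by omega⟩ := by apply Fin.ext; simp only [Fin.val_mk]; omega
  rw [e1] at h; exact h

lemma mB_not_mem_odd (hS : IsStandardB n k S) {p : ℕ} (hp : p < k) :
    mB S ⟨2*p+2, by omega⟩ ∉ S ⟨2*p+1, by omega⟩ := by
  intro h
  exact Finset.disjoint_left.1
    (hS.1.2.1 ⟨2*p+1, by omega⟩ ⟨2*p+2, by omega⟩ (by apply Fin.ne_of_val_ne; simp only [Fin.val_mk]; omega))
    h (mB_mem_even' hS hp)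

lemma MB_bounds (hS : IsOrderedB n k S) {j : Fin (2*k+1)} (hj : j ≠ 0) :
    1 ≤ MB S j ∧ MB S j ≤ n := by
  obtain ⟨x, hx, hx2⟩ := amax_exists (S j) (hS.1 j)
  rw [MB_amax]
  have hxa := mem_angleB.1 (block_subset hS j x hx)
  have hx0 : x ≠ 0 := by rintro rfl; exact zero_not_mem_block hS hj hx
  rw [← hx2]
  constructor
  · rcases abs_cases x with ⟨h,_⟩|⟨h,_⟩ <;> omega
  · rcases abs_cases x with ⟨h,_⟩|⟨h,_⟩ <;> omega

lemma MB_pair_mem (hS : IsOrderedB n k S) {p : ℕ} (hp : p < k) :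
    MB S ⟨2*p+2, by omega⟩ ∈ S ⟨2*p+2, by omega⟩ ∨
    MB S ⟨2*p+2, by omega⟩ ∈ S ⟨2*p+1, by omega⟩ := by
  obtain ⟨x, hx, hx2⟩ := amax_exists (S ⟨2*p+2, by omega⟩) (hS.1 _)
  rw [MB_amax] at *
  rcases le_or_gt 0 x with h | h
  · left; rwa [← hx2, abs_of_nonneg h]
  · right
    rw [pair_odd hS hp]
    rw [← hx2, abs_of_neg h]
    exact Finset.mem_image_of_mem _ hx

lemma MB_inj (hS : IsOrderedB n k S) {p q : ℕ} (hp : p < k) (hq : q < k) (hne : p ≠ q) :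
    MB S ⟨2*p+2, by omega⟩ ≠ MB S ⟨2*q+2, by omega⟩ := by
  intro h
  have h1 := MB_pair_mem hS hp
  have h2 := MB_pair_mem hS hq
  rw [h] at h1
  rcases h1 with h1 | h1 <;> rcases h2 with h2 | h2 <;>
    exact Finset.disjoint_left.1
      (hS.2.1 _ _ (by apply Fin.ne_of_val_ne; simp only [Fin.val_mk]; omega)) h1 h2

end Struct
section Construct
variable (n k : ℕ) (S : Fin (2*k+1) → Finset ℤ)

/-- ν value of source pair q : the new pair-minimum after complementation. -/
def nuF : Fin k → ℤ := fun q => (n:ℤ) + 1 - MB S ⟨2*q.val+2, by have := q.isLt; omega⟩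

/-- sorting permutation of the pairs by ν. -/
noncomputable def sortP : Equiv.Perm (Fin k) := Tuple.sort (nuF n k S)

def rhoN' (ρ : Equiv.Perm (Fin k)) : ℕ → ℕ := fun x => if h : x < k then (ρ ⟨x,h⟩).val else x

noncomputable def rhoN : ℕ → ℕ := rhoN' k (sortP n k S)

noncomputable def swN : ℕ → Bool := fun x =>
  if h : x < k then
    (if nuF n k S (sortP n k S ⟨x,h⟩) ∈
        (S ⟨2*(sortP n k S ⟨x,h⟩).val+2, by have := (sortP n k S ⟨x,h⟩).isLt; omega⟩).image (complB n)
     then false else true)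
  else false

noncomputable def stdN : ℕ → ℕ := fun x =>
  if x = 0 then 0
  else 2 * rhoN n k S ((x-1)/2) + 1 + (if swN n k S ((x-1)/2) then 1 - (x-1)%2 else (x-1)%2)

lemma rhoN_lt {x : ℕ} (hx : x < k) : rhoN n k S x < k := by
  unfold rhoN rhoN'; rw [dif_pos hx]; exact (sortP n k S ⟨x,hx⟩).isLt

lemma rhoN_inj {x y : ℕ} (hx : x < k) (hy : y < k) (h : rhoN n k S x = rhoN n k S y) :
    x = y := by
  unfold rhoN rhoN' at h; rw [dif_pos hx, dif_pos hy] at h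
  have := (sortP n k S).injective (Fin.ext h)
  exact congrArg Fin.val this

lemma stdN_lt {x : ℕ} (hx : x < 2*k+1) : stdN n k S x < 2*k+1 := by
  unfold stdN; split_ifs with h1 h2
  · omega
  · have := rhoN_lt n k S (x := (x-1)/2) (by omega); omega
  · have := rhoN_lt n k S (x := (x-1)/2) (by omega); omega

lemma stdN_inj {x y : ℕ} (hx : x < 2*k+1) (hy : y < 2*k+1)
    (h : stdN n k S x = stdN n k S y) : x = y := by
  by_cases h1 : x = 0 <;> by_cases h2 : y = 0
  · omega
  · exfalso; unfold stdN at h; rw [if_pos h1, if_neg h2] at h; split_ifs at h <;> omega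
  · exfalso; unfold stdN at h; rw [if_neg h1, if_pos h2] at h; split_ifs at h <;> omega
  · unfold stdN at h; rw [if_neg h1, if_neg h2] at h
    have hr : rhoN n k S ((x-1)/2) = rhoN n k S ((y-1)/2) := by split_ifs at h <;> omega
    have hq : (x-1)/2 = (y-1)/2 := rhoN_inj n k S (by omega) (by omega) hr
    rw [hq] at h
    split_ifs at h <;> omega

noncomputable def stdPerm : Equiv.Perm (Fin (2*k+1)) :=
  Equiv.ofBijective (fun j => ⟨stdN n k S j.val, stdN_lt n k S j.isLt⟩)
    ((Finite.injective_iff_bijective).1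
      (fun a b hab => Fin.ext (stdN_inj n k S a.isLt b.isLt (congrArg Fin.val hab))))

lemma stdPerm_apply (j : Fin (2*k+1)) :
    stdPerm n k S j = ⟨stdN n k S j.val, stdN_lt n k S j.isLt⟩ := rfl

lemma stdN_zero : stdN n k S 0 = 0 := by simp [stdN]

lemma stdN_odd {p : ℕ} (hp : p < k) :
    stdN n k S (2*p+1) =
      if swN n k S p then 2*(rhoN n k S p)+2 else 2*(rhoN n k S p)+1 := by
  unfold stdN; rw [if_neg (by omega)]
  have h1 : (2*p+1-1)/2 = p := by omega
  have h2 : (2*p+1-1)%2 = 0 := by omega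
  rw [h1, h2]; split_ifs <;> omega

lemma stdN_even {p : ℕ} (hp : p < k) :
    stdN n k S (2*p+2) =
      if swN n k S p then 2*(rhoN n k S p)+1 else 2*(rhoN n k S p)+2 := by
  unfold stdN; rw [if_neg (by omega)]
  have h1 : (2*p+2-1)/2 = p := by omega
  have h2 : (2*p+2-1)%2 = 1 := by omega
  rw [h1, h2]; split_ifs <;> omega

/-- The standardization of the complement. -/
noncomputable def stdT : Fin (2*k+1) → Finset ℤ :=
  fun j => complP n S (stdPerm n k S j)

lemma nuF_inj {n k : ℕ} {S : Fin (2*k+1) → Finset ℤ} (hS : IsOrderedB n k S) :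
    Function.Injective (nuF n k S) := by
  intro a b h
  by_contra hne
  have hMB := MB_inj hS a.isLt b.isLt (fun hv => hne (Fin.ext hv))
  unfold nuF at h
  apply hMB; omega

lemma nuSort_strictMono {n k : ℕ} {S : Fin (2*k+1) → Finset ℤ} (hS : IsOrderedB n k S) :
    StrictMono (fun i => nuF n k S (sortP n k S i)) :=
  (Tuple.monotone_sort (nuF n k S)).strictMono_of_injective
    ((nuF_inj hS).comp (sortP n k S).injective)

end Construct
set_option maxHeartbeats 2000000
section Std
variable (n k : ℕ) (S : Fin (2*k+1) → Finset ℤ)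

lemma stdPerm_even_eq {p : ℕ} (hp : p < k) (h2 : 2*p+2 < 2*k+1) :
    stdPerm n k S ⟨2*p+2, h2⟩ =
      if swN n k S p
      then (⟨2*(sortP n k S ⟨p,hp⟩).val+1, by have := (sortP n k S ⟨p,hp⟩).isLt; omega⟩ : Fin (2*k+1))
      else ⟨2*(sortP n k S ⟨p,hp⟩).val+2, by have := (sortP n k S ⟨p,hp⟩).isLt; omega⟩ := by
  have hrho : rhoN n k S p = (sortP n k S ⟨p,hp⟩).val := by
    unfold rhoN rhoN'; rw [dif_pos hp]
  apply Fin.ext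
  rw [stdPerm_apply]
  show stdN n k S (2*p+2) = _
  rw [stdN_even n k S hp, hrho]
  split_ifs <;> rfl

lemma stdPerm_odd_eq {p : ℕ} (hp : p < k) (h2 : 2*p+1 < 2*k+1) :
    stdPerm n k S ⟨2*p+1, h2⟩ =
      if swN n k S p
      then (⟨2*(sortP n k S ⟨p,hp⟩).val+2, by have := (sortP n k S ⟨p,hp⟩).isLt; omega⟩ : Fin (2*k+1))
      else ⟨2*(sortP n k S ⟨p,hp⟩).val+1, by have := (sortP n k S ⟨p,hp⟩).isLt; omega⟩ := by
  have hrho : rhoN n k S p = (sortP n k S ⟨p,hp⟩).val := by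
    unfold rhoN rhoN'; rw [dif_pos hp]
  apply Fin.ext
  rw [stdPerm_apply]
  show stdN n k S (2*p+1) = _
  rw [stdN_odd n k S hp, hrho]
  split_ifs <;> rfl

lemma stdPerm_zero_eq : stdPerm n k S 0 = 0 := by
  apply Fin.ext
  rw [stdPerm_apply]
  show stdN n k S ((0 : Fin (2*k+1)).val) = _
  rw [Fin.val_zero, stdN_zero]

end Std

section Std2
variable {n k : ℕ} {S : Fin (2*k+1) → Finset ℤ}

lemma nu_mem_or (hS : IsOrderedB n k S) (q : Fin k) :
    nuF n k S q ∈ (S ⟨2*q.val+2, by have := q.isLt; omega⟩).image (complB n) ∨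
    nuF n k S q ∈ (S ⟨2*q.val+1, by have := q.isLt; omega⟩).image (complB n) := by
  have hM := MB_bounds hS (j := ⟨2*q.val+2, by have := q.isLt; omega⟩)
    (by apply Fin.ne_of_val_ne; simp only [Fin.val_mk, Fin.val_zero]; omega)
  have hval : complB n (MB S ⟨2*q.val+2, by have := q.isLt; omega⟩) = nuF n k S q := by
    rw [complB_pos_eval (by omega)]; rfl
  rcases MB_pair_mem hS q.isLt with h | h
  · left; exact hval ▸ Finset.mem_image_of_mem _ h
  · right
    have hMp : MB S ⟨2*q.val+2, by have := q.isLt; omega⟩ = MB S ⟨2*q.val+1, by have := q.isLt; omega⟩ :=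
      (MB_pair hS q.isLt).symm
    exact hval ▸ Finset.mem_image_of_mem _ h

lemma swN_false_mem {p : ℕ} (hp : p < k) (h : swN n k S p = false) :
    nuF n k S (sortP n k S ⟨p,hp⟩) ∈
      (S ⟨2*(sortP n k S ⟨p,hp⟩).val+2, by have := (sortP n k S ⟨p,hp⟩).isLt; omega⟩).image (complB n) := by
  unfold swN at h; rw [dif_pos hp] at h
  split_ifs at h with hc
  exact hc

lemma swN_true_mem (hS : IsOrderedB n k S) {p : ℕ} (hp : p < k) (h : swN n k S p = true) :
    nuF n k S (sortP n k S ⟨p,hp⟩) ∈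
      (S ⟨2*(sortP n k S ⟨p,hp⟩).val+1, by have := (sortP n k S ⟨p,hp⟩).isLt; omega⟩).image (complB n) := by
  have hnot : nuF n k S (sortP n k S ⟨p,hp⟩) ∉
      (S ⟨2*(sortP n k S ⟨p,hp⟩).val+2, by have := (sortP n k S ⟨p,hp⟩).isLt; omega⟩).image (complB n) := by
    unfold swN at h; rw [dif_pos hp] at h
    split_ifs at h with hc
    exact hc
  rcases nu_mem_or hS (sortP n k S ⟨p,hp⟩) with h1 | h1
  · exact absurd h1 hnot
  · exact h1

lemma stdT_mB_even (hS : IsOrderedB n k S) {p : ℕ} (hp : p < k) (h2 : 2*p+2 < 2*k+1) :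
    mB (stdT n k S) ⟨2*p+2, h2⟩ = nuF n k S (sortP n k S ⟨p, hp⟩) := by
  rw [mB_amin]
  show amin (complP n S (stdPerm n k S ⟨2*p+2, h2⟩)) = _
  rw [stdPerm_even_eq n k S hp h2]
  have hq := (sortP n k S ⟨p,hp⟩).isLt
  split_ifs with hsw
  · have := amin_complB (n := n) (s := S ⟨2*(sortP n k S ⟨p,hp⟩).val+1, by omega⟩)
      (hS.1 _) (block_subset hS _)
      (zero_not_mem_block hS (by apply Fin.ne_of_val_ne; simp only [Fin.val_mk, Fin.val_zero]; omega))
    show amin ((S _).image (complB n)) = _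
    rw [this]
    have h3 := MB_pair hS (p := (sortP n k S ⟨p,hp⟩).val) hq
    rw [MB_amax, MB_amax] at h3
    rw [h3]; rfl
  · have := amin_complB (n := n) (s := S ⟨2*(sortP n k S ⟨p,hp⟩).val+2, by omega⟩)
      (hS.1 _) (block_subset hS _)
      (zero_not_mem_block hS (by apply Fin.ne_of_val_ne; simp only [Fin.val_mk, Fin.val_zero]; omega))
    show amin ((S _).image (complB n)) = _
    rw [this]; rfl

lemma zero_mem_stdT (hS : IsOrderedB n k S) : (0:ℤ) ∈ stdT n k S 0 := by
  show (0:ℤ) ∈ complP n S (stdPerm n k S 0)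
  rw [stdPerm_zero_eq]
  exact Finset.mem_image.2 ⟨0, hS.2.2.2.1, complB_zero n⟩

theorem stdT_standard (hS : IsStandardB n k S) : IsStandardB n k (stdT n k S) := by
  obtain ⟨hO, hmin, hchain⟩ := hS
  have hS' : IsStandardB n k S := ⟨hO, hmin, hchain⟩
  obtain ⟨hne, hdisj, hcover, h0, hneg, hpair⟩ := hO
  have hO' : IsOrderedB n k S := ⟨hne, hdisj, hcover, h0, hneg, hpair⟩
  refine ⟨⟨?_, ?_, ?_, ?_, ?_, ?_⟩, ?_, ?_⟩
  · exact fun j => (hne _).image _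
  · intro i j hij
    exact disjoint_image_complB
      (hdisj _ _ (fun hc => hij ((stdPerm n k S).injective hc)))
      (block_subset hO' _) (block_subset hO' _)
  · apply Finset.Subset.antisymm
    · intro x hx
      rw [Finset.mem_biUnion] at hx
      obtain ⟨j, _, hj⟩ := hx
      obtain ⟨y, hy, rfl⟩ := Finset.mem_image.1 hj
      exact complB_mem (block_subset hO' _ y hy)
    · intro x hx
      rw [Finset.mem_biUnion]
      have hcx : complB n x ∈ angleB n := complB_mem hx
      rw [← hcover, Finset.mem_biUnion] at hcx
      obtain ⟨j, _, hj⟩ := hcx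
      refine ⟨(stdPerm n k S).symm j, Finset.mem_univ _, ?_⟩
      show x ∈ complP n S (stdPerm n k S ((stdPerm n k S).symm j))
      rw [Equiv.apply_symm_apply]
      exact Finset.mem_image.2 ⟨complB n x, hj, complB_complB hx⟩
  · exact zero_mem_stdT hO'
  · intro x hx
    obtain ⟨y, hy, rfl⟩ := Finset.mem_image.1 (by
      have := zero_mem_stdT hO'
      show x ∈ (S (stdPerm n k S 0)).image (complB n)
      exact hx)
    rw [← complB_neg]
    show complB n (-y) ∈ complP n S (stdPerm n k S 0)
    exact Finset.mem_image.2 ⟨-y, by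
      rw [stdPerm_zero_eq] at hy ⊢
      exact hneg y hy, rfl⟩
  · intro i hi h
    have hp : i - 1 < k := by omega
    have e1 : (⟨2*i, h⟩ : Fin (2*k+1)) = ⟨2*(i-1)+2, by omega⟩ := by
      apply Fin.ext; simp only [Fin.val_mk]; omega
    have e2 : (⟨2*i-1, by omega⟩ : Fin (2*k+1)) = ⟨2*(i-1)+1, by omega⟩ := by
      apply Fin.ext; simp only [Fin.val_mk]; omega
    rw [e1, e2]
    show complP n S (stdPerm n k S ⟨2*(i-1)+2, by omega⟩) =
      (complP n S (stdPerm n k S ⟨2*(i-1)+1, by omega⟩)).image (fun x => -x)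
    rw [stdPerm_even_eq n k S hp, stdPerm_odd_eq n k S hp]
    have hq := (sortP n k S ⟨i-1,hp⟩).isLt
    split_ifs with hsw
    · show (S _).image (complB n) = ((S _).image (complB n)).image (fun x => -x)
      rw [← image_complB_neg_comm, ← pair_odd hO' hq]
    · show (S _).image (complB n) = ((S _).image (complB n)).image (fun x => -x)
      rw [← image_complB_neg_comm, ← pair_even hO' hq]
  · intro i hi h
    have hp : i - 1 < k := by omega
    have e1 : (⟨2*i, h⟩ : Fin (2*k+1)) = ⟨2*(i-1)+2, by omega⟩ := by
      apply Fin.ext; simp only [Fin.val_mk]; omega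
    rw [e1, stdT_mB_even hO' hp]
    show nuF n k S (sortP n k S ⟨i-1, hp⟩) ∈ complP n S (stdPerm n k S ⟨2*(i-1)+2, by omega⟩)
    rw [stdPerm_even_eq n k S hp]
    split_ifs with hsw
    · exact swN_true_mem hO' hp hsw
    · exact swN_false_mem hp (by rwa [Bool.not_eq_true] at hsw)
  · intro i h
    have hp : i < k := by omega
    have e1 : (⟨2*(i+1), h⟩ : Fin (2*k+1)) = ⟨2*i+2, by omega⟩ := by
      apply Fin.ext; simp only [Fin.val_mk]; omega
    rw [e1, stdT_mB_even hO' hp]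
    rcases Nat.eq_zero_or_pos i with rfl | hi
    · have e0 : (⟨2*0, by omega⟩ : Fin (2*k+1)) = 0 := by
        apply Fin.ext; simp only [Fin.val_mk, Fin.val_zero]
      rw [e0]
      have hz : mB (stdT n k S) 0 = 0 := amin_zero_mem (zero_mem_stdT hO')
      rw [hz]
      have hM := MB_bounds hO' (j := ⟨2*(sortP n k S ⟨0,hp⟩).val+2,
        by have := (sortP n k S ⟨0,hp⟩).isLt; omega⟩)
        (by apply Fin.ne_of_val_ne; simp only [Fin.val_mk, Fin.val_zero]; omega)
      show (0:ℤ) < (n:ℤ) + 1 - MB S _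
      omega
    · have hp' : i - 1 < k := by omega
      have e2 : (⟨2*i, by omega⟩ : Fin (2*k+1)) = ⟨2*(i-1)+2, by omega⟩ := by
        apply Fin.ext; simp only [Fin.val_mk]; omega
      rw [e2, stdT_mB_even hO' hp']
      exact nuSort_strictMono hO' (a := ⟨i-1, hp'⟩) (b := ⟨i, hp⟩)
        (by simp only [Fin.mk_lt_mk]; omega)
end Std2
lemma strictMono_fin_id {k : ℕ} (f : Fin k → Fin k) (h : StrictMono f) : ∀ i, f i = i := by
  haveI : WellFoundedLT (Fin k) := Finite.to_wellFoundedLT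
  haveI : WellFoundedLT (Fin k)ᵒᵈ := Finite.to_wellFoundedLT
  have h1 : ∀ i, i ≤ f i := fun i => h.le_apply (x := i)
  have h2 : ∀ i : Fin k, f i ≤ i := fun i => h.dual.le_apply (x := OrderDual.toDual i)
  exact fun i => le_antisymm (h2 i) (h1 i)

section Uniq
variable {n k : ℕ} {S : Fin (2*k+1) → Finset ℤ}

lemma mB_even_lt' (hS : IsStandardB n k S) {p q : ℕ} (hp : p < k) (hq : q < k) (hpq : p < q) :
    mB S ⟨2*p+2, by omega⟩ < mB S ⟨2*q+2, by omega⟩ := by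
  have h := mB_even_lt hS (i := p+1) (j := q+1) (by omega) (by omega)
  have e1 : (⟨2*(p+1), by omega⟩ : Fin (2*k+1)) = ⟨2*p+2, by omega⟩ := by
    apply Fin.ext; simp only [Fin.val_mk]; omega
  have e2 : (⟨2*(q+1), by omega⟩ : Fin (2*k+1)) = ⟨2*q+2, by omega⟩ := by
    apply Fin.ext; simp only [Fin.val_mk]; omega
  rw [e1, e2] at h; exact h

lemma mB_even_pos' (hS : IsStandardB n k S) {p : ℕ} (hp : p < k) :
    0 < mB S ⟨2*p+2, by omega⟩ := by
  have h := mB_even_pos hS (i := p+1) (by omega) (by omega)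
  have e1 : (⟨2*(p+1), by omega⟩ : Fin (2*k+1)) = ⟨2*p+2, by omega⟩ := by
    apply Fin.ext; simp only [Fin.val_mk]; omega
  rw [e1] at h; exact h

theorem std_unique {T : Fin (2*k+1) → Finset ℤ} (hS : IsStandardB n k S)
    (hT : IsStandardB n k T) (τ : Equiv.Perm (Fin (2*k+1)))
    (hτ : ∀ j, T j = S (τ j)) : T = S := by
  have hτ0 : τ 0 = 0 := by
    by_contra hne
    have h1 : (0:ℤ) ∈ S (τ 0) := by rw [← hτ 0]; exact hT.1.2.2.2.1
    exact Finset.disjoint_left.1 (hS.1.2.1 (τ 0) 0 hne) h1 hS.1.2.2.2.1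
  have key : ∀ p : Fin k, ∃ l : Fin k,
      τ ⟨2*p.val+2, by have := p.isLt; omega⟩ = ⟨2*l.val+2, by have := l.isLt; omega⟩ := by
    intro p
    have hp := p.isLt
    set a := τ ⟨2*p.val+2, by omega⟩ with ha
    have hTS : T ⟨2*p.val+2, by omega⟩ = S a := hτ _
    have hmb : mB S a = mB T ⟨2*p.val+2, by omega⟩ := by
      rw [mB_amin, mB_amin, hTS]
    have hmm : mB S a ∈ S a := by
      have h1 := mB_mem_even' hT hp
      rw [hTS] at h1; rwa [hmb]
    have hpos : 0 < mB S a := by rw [hmb]; exact mB_even_pos' hT hp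
    have ha0 : a.val ≠ 0 := by
      intro hv
      have : a = 0 := Fin.ext (by rw [hv, Fin.val_zero])
      rw [this, mB_zero hS.1] at hpos
      exact lt_irrefl 0 hpos
    have hav := a.isLt
    rcases Nat.even_or_odd a.val with he | ho
    · obtain ⟨l, hl⟩ := he
      exact ⟨⟨l-1, by omega⟩, Fin.ext (by simp only [Fin.val_mk]; omega)⟩
    · obtain ⟨l, hl⟩ := ho
      exfalso
      have hlk : l < k := by omega
      have e : a = ⟨2*l+1, by omega⟩ := Fin.ext (by simp only [Fin.val_mk]; omega)
      apply mB_not_mem_odd hS hlk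
      rw [← mB_pair hS.1 hlk, ← e]
      exact hmm
  choose g hg using key
  have hμ : StrictMono (fun l : Fin k => mB S ⟨2*l.val+2, by have := l.isLt; omega⟩) :=
    fun a b hab => mB_even_lt' hS a.isLt b.isLt hab
  have hν : StrictMono (fun p : Fin k => mB T ⟨2*p.val+2, by have := p.isLt; omega⟩) :=
    fun a b hab => mB_even_lt' hT a.isLt b.isLt hab
  have hcomp : ∀ p : Fin k, mB T ⟨2*p.val+2, by have := p.isLt; omega⟩
      = mB S ⟨2*(g p).val+2, by have := (g p).isLt; omega⟩ := by
    intro p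
    rw [mB_amin, mB_amin, hτ, hg p]
  have hgmono : StrictMono g := by
    intro p q hpq
    have h1 : mB T ⟨2*p.val+2, by have := p.isLt; omega⟩
        < mB T ⟨2*q.val+2, by have := q.isLt; omega⟩ := hν hpq
    rw [hcomp p, hcomp q] at h1
    exact hμ.lt_iff_lt.mp h1
  have hgid := strictMono_fin_id g hgmono
  have evenstep : ∀ p : ℕ, ∀ hp : p < k, T ⟨2*p+2, by omega⟩ = S ⟨2*p+2, by omega⟩ := by
    intro p hp
    have h1 := hg ⟨p, hp⟩
    have e2 : (⟨2*(g ⟨p,hp⟩).val+2, by have := (g ⟨p,hp⟩).isLt; omega⟩ : Fin (2*k+1))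
        = ⟨2*p+2, by omega⟩ := by
      apply Fin.ext; simp only [Fin.val_mk]; rw [hgid ⟨p,hp⟩]
    rw [hτ, h1, e2]
  have oddstep : ∀ p : ℕ, ∀ hp : p < k, T ⟨2*p+1, by omega⟩ = S ⟨2*p+1, by omega⟩ := by
    intro p hp
    rw [pair_odd hT.1 hp, pair_odd hS.1 hp, evenstep p hp]
  funext j
  have hj := j.isLt
  rcases Nat.even_or_odd j.val with ⟨l, hl⟩ | ⟨l, hl⟩
  · rcases Nat.eq_zero_or_pos l with rfl | hl1
    · have hz : j = 0 := Fin.ext (by rw [Fin.val_zero]; omega)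
      rw [hz, hτ 0, hτ0]
    · have hz : j = ⟨2*(l-1)+2, by omega⟩ := Fin.ext (by simp only [Fin.val_mk]; omega)
      rw [hz, evenstep (l-1) (by omega)]
  · have hlk : l < k := by omega
    have hz : j = ⟨2*l+1, by omega⟩ := Fin.ext (by simp only [Fin.val_mk]; omega)
    rw [hz, oddstep l hlk]
end Uniq
lemma compl_compl_block {n : ℕ} {s : Finset ℤ} (hsub : ∀ x ∈ s, x ∈ angleB n) :
    (s.image (complB n)).image (complB n) = s := by
  ext z
  constructor
  · intro hz
    obtain ⟨y, hy, rfl⟩ := Finset.mem_image.1 hz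
    obtain ⟨x, hx, rfl⟩ := Finset.mem_image.1 hy
    rwa [complB_complB (hsub x hx)]
  · intro hz
    refine Finset.mem_image.2 ⟨complB n z, Finset.mem_image_of_mem _ hz, complB_complB (hsub z hz)⟩
/-- the map sending a standard type B partition to the
standardization of its complement (a permutation of the complemented blocks)
is an involution, hence a bijection of S_B(⟨n⟩,k). -/
theorem stmt11 (n k : ℕ) :
    ∃ f : {S : Fin (2*k+1) → Finset ℤ // IsStandardB n k S} →
          {S : Fin (2*k+1) → Finset ℤ // IsStandardB n k S},
      (∀ π, ∃ σ : Equiv.Perm (Fin (2*k+1)),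
        ∀ j, (f π).1 j = complP n π.1 (σ j)) ∧
      Function.Involutive f := by
  refine ⟨fun π => ⟨stdT n k π.1, stdT_standard π.2⟩,
    fun π => ⟨stdPerm n k π.1, fun j => rfl⟩, ?_⟩
  intro π
  apply Subtype.ext
  show stdT n k (stdT n k π.1) = π.1
  apply std_unique π.2 (stdT_standard (stdT_standard π.2))
    ((stdPerm n k (stdT n k π.1)).trans (stdPerm n k π.1))
  intro j
  show ((π.1 (stdPerm n k π.1 (stdPerm n k (stdT n k π.1) j))).image (complB n)).image (complB n)
      = π.1 (stdPerm n k π.1 (stdPerm n k (stdT n k π.1) j))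
  exact compl_compl_block (block_subset π.2.1 _)
end

section
/- For every standard type B partition ρ of ⟨n⟩ with 2k+1 blocks, los_{B'}(ρ) ≥ k(k+1), with the minimum k(k+1) attained by the partition where S_0 = {-(n-k),...,-1,0,1,...,n-k} and the remaining blocks are singletons of the largest k values and their negatives. -/
open Finset Polynomial

/-- The minimizing partition: S₀ = {-(n-k),...,n-k} and the remaining blocks are
singletons {-(n-k+ℓ)}, {n-k+ℓ} for ℓ = 1,...,k. -/
noncomputable def minPartB (n k : ℕ) : Fin (2*k+1) → Finset ℤ :=
  fun t =>
    if t.val = 0 then Finset.Icc (-((n : ℤ) - k)) ((n : ℤ) - k)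
    else if t.val % 2 = 1 then {-((n : ℤ) - k + (((t.val + 1) / 2 : ℕ) : ℤ))}
    else {(n : ℤ) - k + ((t.val / 2 : ℕ) : ℤ)}


lemma mB_eq_min' {m : ℕ} (S : Fin m → Finset ℤ) (j : Fin m) (h : (S j).Nonempty) :
    mB S j = ((S j).image (fun x => |x|)).min' (h.image _) := by
  rw [mB, ← Finset.coe_min' (h.image _), WithTop.untopD_coe]

lemma mB_mem_abs {m : ℕ} (S : Fin m → Finset ℤ) (j : Fin m) (h : (S j).Nonempty) :
    ∃ x ∈ S j, |x| = mB S j := by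
  rw [mB_eq_min' S j h]
  have := Finset.min'_mem ((S j).image (fun x => |x|)) (h.image _)
  simpa using this

lemma mB_le_abs {m : ℕ} (S : Fin m → Finset ℤ) (j : Fin m) {x : ℤ} (hx : x ∈ S j) :
    mB S j ≤ |x| := by
  rw [mB_eq_min' S j ⟨x, hx⟩]
  exact Finset.min'_le _ _ (Finset.mem_image_of_mem _ hx)

lemma mB_nonneg {m : ℕ} (S : Fin m → Finset ℤ) (j : Fin m) : 0 ≤ mB S j := by
  rcases (S j).eq_empty_or_nonempty with h | h
  · simp [mB, h]
  · obtain ⟨x, _, hx⟩ := mB_mem_abs S j h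
    rw [← hx]; exact abs_nonneg x

lemma mB_singleton {m : ℕ} (S : Fin m → Finset ℤ) (j : Fin m) (v : ℤ) (h : S j = {v}) :
    mB S j = |v| := by
  simp [mB, h]

lemma mB_congr {m : ℕ} (S : Fin m → Finset ℤ) (i j : Fin m)
    (h : S i = (S j).image (fun x => -x)) : mB S i = mB S j := by
  have : (S i).image (fun x => |x|) = (S j).image (fun x => |x|) := by
    rw [h, Finset.image_image]
    apply Finset.image_congr
    intro x _
    simp [abs_neg]
  simp [mB, this]

def Fpairs (k : ℕ) : Finset (ℕ × ℕ) :=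
  (Finset.Icc 1 k).biUnion (fun l => (Finset.range (2*l)).image (fun j => (l, j)))

lemma mem_Fpairs {k : ℕ} {p : ℕ × ℕ} :
    p ∈ Fpairs k ↔ 1 ≤ p.1 ∧ p.1 ≤ k ∧ p.2 < 2 * p.1 := by
  rcases p with ⟨l, j⟩
  simp only [Fpairs, Finset.mem_biUnion, Finset.mem_Icc, Finset.mem_image,
    Finset.mem_range, Prod.mk.injEq]
  constructor
  · rintro ⟨a, ⟨h1, h2⟩, b, hb, rfl, rfl⟩; exact ⟨h1, h2, hb⟩
  · rintro ⟨h1, h2, h3⟩; exact ⟨l, ⟨h1, h2⟩, j, h3, rfl, rfl⟩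

lemma card_Fpairs (k : ℕ) : (Fpairs k).card = k * (k+1) := by
  rw [Fpairs, Finset.card_biUnion]
  · have : ∀ l ∈ Finset.Icc 1 k, ((Finset.range (2*l)).image (fun j => (l, j))).card = 2*l := by
      intro l _
      rw [Finset.card_image_of_injective _ (by intro a b h; simpa using h)]
      simp
    rw [Finset.sum_congr rfl this]
    clear this
    induction k with
    | zero => simp
    | succ k ih =>
      rw [Finset.sum_Icc_succ_top (by omega : 1 ≤ k + 1), ih]; ring
  · intro a _ b _ hab
    simp only [Finset.disjoint_left]
    rintro ⟨x, y⟩ hx hy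
    simp only [Finset.mem_image, Finset.mem_range] at hx hy
    obtain ⟨a1, _, ha1⟩ := hx
    obtain ⟨a2, _, ha2⟩ := hy
    apply hab
    have := ha1.trans ha2.symm
    simpa using congrArg Prod.fst this

lemma card_le_ncard_of_inj {α β : Type*} (F : Finset α) (f : α → β) (T : Set β)
    (hinj : Set.InjOn f ↑F) (hsub : f '' ↑F ⊆ T) (hT : T.Finite) :
    F.card ≤ T.ncard := by
  calc F.card = (↑F : Set α).ncard := (Set.ncard_coe_finset _).symm
    _ = (f '' ↑F).ncard := (Set.ncard_image_of_injOn hinj).symm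
    _ ≤ T.ncard := Set.ncard_le_ncard hsub hT

lemma ncard_eq_card_of_inj {α β : Type*} (F : Finset α) (f : α → β) (T : Set β)
    (hinj : Set.InjOn f ↑F) (hset : T = f '' ↑F) : T.ncard = F.card := by
  rw [hset, Set.ncard_image_of_injOn hinj, Set.ncard_coe_finset]

def gIdx (k a : ℕ) : Fin (2*k+1) := ⟨a % (2*k+1), Nat.mod_lt _ (by omega)⟩

lemma gIdx_eq (k a : ℕ) (h : a < 2*k+1) : gIdx k a = ⟨a, h⟩ :=
  Fin.mk_eq_mk.mpr (Nat.mod_eq_of_lt h)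

lemma losB'_finite {n k : ℕ} {S : Fin (2*k+1) → Finset ℤ}
    (hcov : Finset.univ.biUnion S = angleB n) :
    {p : ℤ × Fin (2*k+1) | (∃ i, p.2 < i ∧ p.1 ∈ S i) ∧ mB S p.2 ≤ p.1}.Finite := by
  apply Set.Finite.subset (((angleB n).finite_toSet).prod (Set.finite_univ))
  rintro ⟨s, j⟩ ⟨⟨i, _, hi⟩, _⟩
  refine ⟨?_, trivial⟩
  have : s ∈ Finset.univ.biUnion S := Finset.mem_biUnion.mpr ⟨i, Finset.mem_univ _, hi⟩
  rw [hcov] at this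
  exact this

set_option maxHeartbeats 1000000 in
lemma stmt19_lower (n k : ℕ) (S : Fin (2*k+1) → Finset ℤ) (hS : IsStandardB n k S) :
    k*(k+1) ≤ losB' S := by
  obtain ⟨⟨hne, hdis, hcov, h0, hneg0, hpairing⟩, hmem, hchain⟩ := hS
  have hmono : ∀ l (hl : l ≤ k), ∀ i (hi : i < l),
      mB S ⟨2*i, by omega⟩ < mB S ⟨2*l, by omega⟩ := by
    intro l
    induction l with
    | zero => intro _ i hi; omega
    | succ l ih =>
      intro hl i hi
      have hstep : mB S ⟨2*l, by omega⟩ < mB S ⟨2*(l+1), by omega⟩ :=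
        hchain l (by omega)
      rcases Nat.lt_succ_iff_lt_or_eq.mp hi with h | h
      · exact (ih (by omega) i h).trans hstep
      · subst h; exact hstep
  have hodd : ∀ i (h1 : 1 ≤ i) (h : 2*i < 2*k+1),
      mB S ⟨2*i-1, by omega⟩ = mB S ⟨2*i, h⟩ :=
    fun i h1 h2 => (mB_congr S ⟨2*i, h2⟩ ⟨2*i-1, by omega⟩ (hpairing i h1 h2)).symm
  rw [losB', ← card_Fpairs k]
  apply card_le_ncard_of_inj (Fpairs k)
    (fun p => (mB S (gIdx k (2*p.1)), gIdx k p.2)) _ ?_ ?_ (losB'_finite hcov)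
  · -- injective
    rintro ⟨l1, j1⟩ hp ⟨l2, j2⟩ hq heq
    rw [Finset.mem_coe, mem_Fpairs] at hp hq
    obtain ⟨hp1, hp2, hp3⟩ := hp
    obtain ⟨hq1, hq2, hq3⟩ := hq
    have h1 : mB S (gIdx k (2*l1)) = mB S (gIdx k (2*l2)) := congrArg Prod.fst heq
    have h2 : gIdx k j1 = gIdx k j2 := congrArg Prod.snd heq
    clear heq
    have hb1 : 2*l1 < 2*k+1 := by omega
    have hb2 : 2*l2 < 2*k+1 := by omega
    have hb3 : j1 < 2*k+1 := by omega
    have hb4 : j2 < 2*k+1 := by omega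
    rw [gIdx_eq k (2*l1) hb1, gIdx_eq k (2*l2) hb2] at h1
    rw [gIdx_eq k j1 hb3, gIdx_eq k j2 hb4, Fin.mk_eq_mk] at h2
    have hl : l1 = l2 := by
      by_contra hne'
      rcases Nat.lt_or_ge l1 l2 with h | h
      · exact absurd h1 (ne_of_lt (hmono l2 hq2 l1 h))
      · exact absurd h1.symm (ne_of_lt (hmono l1 hp2 l2 (by omega)))
    simp only [Prod.mk.injEq]
    exact ⟨hl, h2⟩
  · -- image subset
    rintro p ⟨⟨l, j0⟩, hp, rfl⟩
    rw [Finset.mem_coe, mem_Fpairs] at hp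
    obtain ⟨hl1, hl2, hj⟩ := hp
    simp only [Set.mem_setOf_eq]
    have hb1 : 2*l < 2*k+1 := by omega
    have hb2 : j0 < 2*k+1 := by omega
    rw [gIdx_eq k (2*l) hb1, gIdx_eq k j0 hb2]
    constructor
    · exact ⟨⟨2*l, by omega⟩, Fin.mk_lt_mk.mpr hj, hmem l hl1 (by omega)⟩
    · rcases Nat.even_or_odd j0 with ⟨i, hi⟩ | ⟨i, hi⟩
      · have e : (⟨j0, by omega⟩ : Fin (2*k+1)) = ⟨2*i, by omega⟩ :=
          Fin.mk_eq_mk.mpr (by omega)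
        rw [e]
        exact le_of_lt (hmono l hl2 i (by omega))
      · have e : (⟨j0, by omega⟩ : Fin (2*k+1)) = ⟨2*(i+1)-1, by omega⟩ :=
          Fin.mk_eq_mk.mpr (by omega)
        rw [e, hodd (i+1) (by omega) (by omega)]
        rcases Nat.lt_or_ge (i+1) l with h | h
        · exact le_of_lt (hmono l hl2 (i+1) h)
        · have hil : i + 1 = l := by omega
          subst hil
          exact le_refl _


lemma minPartB_even (n k i : ℕ) (h1 : 1 ≤ i) (h : 2*i < 2*k+1) :
    minPartB n k ⟨2*i, h⟩ = {(n:ℤ) - k + i} := by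
  simp only [minPartB]
  rw [if_neg (by omega), if_neg (by omega)]
  have h2 : 2*i/2 = i := by omega
  rw [h2]

lemma minPartB_odd (n k i : ℕ) (h1 : 1 ≤ i) (h : 2*i-1 < 2*k+1) :
    minPartB n k ⟨2*i-1, h⟩ = {-((n:ℤ) - k + i)} := by
  simp only [minPartB]
  rw [if_neg (by omega), if_pos (by omega)]
  have h2 : (2*i-1+1)/2 = i := by omega
  rw [h2]

lemma minPartB_zval (n k : ℕ) (t : Fin (2*k+1)) (ht : t.val = 0) :
    minPartB n k t = Finset.Icc (-((n:ℤ)-k)) ((n:ℤ)-k) := by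
  simp only [minPartB, ht, if_pos]

lemma minPartB_cases (n k : ℕ) (t : Fin (2*k+1)) (ht : t.val ≠ 0) :
    ∃ l, 1 ≤ l ∧ l ≤ k ∧
      ((t.val = 2*l-1 ∧ minPartB n k t = {-((n:ℤ)-k+l)}) ∨
       (t.val = 2*l ∧ minPartB n k t = {((n:ℤ)-k+l)})) := by
  rcases Nat.even_or_odd t.val with ⟨i, hi⟩ | ⟨i, hi⟩
  · have hlt := t.isLt
    refine ⟨i, by omega, by omega, Or.inr ⟨by omega, ?_⟩⟩
    have he : t = ⟨2*i, by omega⟩ := Fin.ext (show t.val = 2*i by omega)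
    rw [he, minPartB_even n k i (by omega) (by omega)]
  · have hlt := t.isLt
    refine ⟨i+1, by omega, by omega, Or.inl ⟨by omega, ?_⟩⟩
    have he : t = ⟨2*(i+1)-1, by omega⟩ := Fin.ext (show t.val = 2*(i+1)-1 by omega)
    rw [he, minPartB_odd n k (i+1) (by omega) (by omega)]

lemma mB_minPartB_even (n k : ℕ) (hk : k ≤ n) (i : ℕ) (h : 2*i < 2*k+1) :
    mB (minPartB n k) ⟨2*i, h⟩ = if i = 0 then 0 else (n:ℤ) - k + i := by
  split_ifs with h0
  · subst h0
    have hz : minPartB n k ⟨2*0, h⟩ = Finset.Icc (-((n:ℤ)-k)) ((n:ℤ)-k) :=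
      minPartB_zval n k _ rfl
    have h0mem : (0:ℤ) ∈ minPartB n k ⟨2*0, h⟩ := by
      rw [hz, Finset.mem_Icc]
      constructor <;> omega
    have h1 := mB_le_abs (minPartB n k) ⟨2*0, h⟩ h0mem
    have h2 := mB_nonneg (minPartB n k) (⟨2*0, h⟩ : Fin (2*k+1))
    rw [abs_zero] at h1
    omega
  · rw [mB_singleton (minPartB n k) _ ((n:ℤ) - k + i)
      (minPartB_even n k i (by omega) h)]
    rw [abs_of_nonneg (by push_cast; omega)]

lemma mB_minPartB_odd (n k : ℕ) (hk : k ≤ n) (i : ℕ) (h1 : 1 ≤ i) (h : 2*i-1 < 2*k+1) :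
    mB (minPartB n k) ⟨2*i-1, h⟩ = (n:ℤ) - k + i := by
  rw [mB_singleton (minPartB n k) _ (-((n:ℤ) - k + i)) (minPartB_odd n k i h1 h)]
  rw [abs_neg, abs_of_nonneg (by push_cast; omega)]

lemma disj_zero (n k : ℕ) (i j : Fin (2*k+1)) (hi : i.val = 0) (hj : j.val ≠ 0) :
    Disjoint (minPartB n k i) (minPartB n k j) := by
  obtain ⟨l, hl1, hl2, hc⟩ := minPartB_cases n k j hj
  rw [minPartB_zval n k i hi]
  rcases hc with ⟨_, hv⟩ | ⟨_, hv⟩ <;>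
  · rw [hv, Finset.disjoint_singleton_right, Finset.mem_Icc]
    push_cast
    omega

lemma minPartB_standard (n k : ℕ) (hk : k ≤ n) : IsStandardB n k (minPartB n k) := by
  refine ⟨⟨?_, ?_, ?_, ?_, ?_, ?_⟩, ?_, ?_⟩
  · -- nonempty
    intro t
    by_cases ht : t.val = 0
    · rw [minPartB_zval n k t ht]
      exact Finset.nonempty_Icc.mpr (by omega)
    · obtain ⟨l, _, _, hc⟩ := minPartB_cases n k t ht
      rcases hc with ⟨_, hv⟩ | ⟨_, hv⟩ <;> rw [hv] <;> exact Finset.singleton_nonempty _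
  · -- disjoint
    intro i j hij
    by_cases hi : i.val = 0
    · by_cases hj : j.val = 0
      · exact absurd (Fin.ext (hi.trans hj.symm)) hij
      · exact disj_zero n k i j hi hj
    · by_cases hj : j.val = 0
      · exact (disj_zero n k j i hj hi).symm
      · obtain ⟨l1, hl11, hl12, hc1⟩ := minPartB_cases n k i hi
        obtain ⟨l2, hl21, hl22, hc2⟩ := minPartB_cases n k j hj
        have hne : i.val ≠ j.val := fun h => hij (Fin.ext h)
        rcases hc1 with ⟨hv1, he1⟩ | ⟨hv1, he1⟩ <;> rcases hc2 with ⟨hv2, he2⟩ | ⟨hv2, he2⟩ <;>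
          (rw [he1, he2, Finset.disjoint_singleton]; intro heq; omega)
  · -- cover
    ext x
    rw [Finset.mem_biUnion]
    simp only [angleB, Finset.mem_Icc]
    constructor
    · rintro ⟨t, _, hx⟩
      by_cases ht : t.val = 0
      · rw [minPartB_zval n k t ht, Finset.mem_Icc] at hx
        constructor <;> omega
      · obtain ⟨l, hl1, hl2, hc⟩ := minPartB_cases n k t ht
        rcases hc with ⟨_, hv⟩ | ⟨_, hv⟩ <;>
        · rw [hv, Finset.mem_singleton] at hx
          subst hx
          constructor <;> push_cast <;> omega
    · rintro ⟨hx1, hx2⟩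
      by_cases h1 : -((n:ℤ)-k) ≤ x ∧ x ≤ (n:ℤ)-k
      · refine ⟨⟨0, by omega⟩, Finset.mem_univ _, ?_⟩
        rw [minPartB_zval n k _ rfl, Finset.mem_Icc]
        exact h1
      · by_cases h2 : (n:ℤ)-k < x
        · have hnn : (0:ℤ) ≤ x - ((n:ℤ)-k) := by omega
          have hl : ((x - ((n:ℤ)-k)).toNat : ℤ) = x - ((n:ℤ)-k) := Int.toNat_of_nonneg hnn
          refine ⟨⟨2*(x - ((n:ℤ)-k)).toNat, by omega⟩, Finset.mem_univ _, ?_⟩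
          rw [minPartB_even n k _ (by omega) (by omega), Finset.mem_singleton]
          omega
        · have h3 : x < -((n:ℤ)-k) := by omega
          have hnn : (0:ℤ) ≤ -x - ((n:ℤ)-k) := by omega
          have hl : ((-x - ((n:ℤ)-k)).toNat : ℤ) = -x - ((n:ℤ)-k) := Int.toNat_of_nonneg hnn
          refine ⟨⟨2*(-x - ((n:ℤ)-k)).toNat - 1, by omega⟩, Finset.mem_univ _, ?_⟩
          rw [minPartB_odd n k _ (by omega) (by omega), Finset.mem_singleton]
          omega
  · -- 0 ∈ S 0
    rw [minPartB_zval n k 0 rfl, Finset.mem_Icc]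
    constructor <;> omega
  · -- neg closed
    intro x hx
    rw [minPartB_zval n k 0 rfl, Finset.mem_Icc] at *
    omega
  · -- pairing
    intro i h1 h
    rw [minPartB_even n k i h1 h, minPartB_odd n k i h1 (by omega)]
    simp
  · -- mB mem
    intro i h1 h
    have hne : ¬ (i = 0) := by omega
    rw [mB_minPartB_even n k hk i h, if_neg hne, minPartB_even n k i h1 h]
    exact Finset.mem_singleton_self _
  · -- chain
    intro i h
    rw [mB_minPartB_even n k hk i (by omega), mB_minPartB_even n k hk (i+1) h,
      if_neg (Nat.succ_ne_zero i)]
    by_cases h0 : i = 0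
    · rw [if_pos h0]
      push_cast
      omega
    · rw [if_neg h0]
      push_cast
      omega

lemma losB'_minPartB (n k : ℕ) (hk : k ≤ n) : losB' (minPartB n k) = k*(k+1) := by
  rw [losB', ← card_Fpairs k]
  apply ncard_eq_card_of_inj (Fpairs k)
    (fun p => ((n:ℤ) - k + p.1, gIdx k p.2))
  · -- injective
    rintro ⟨l1, j1⟩ hp ⟨l2, j2⟩ hq heq
    rw [Finset.mem_coe, mem_Fpairs] at hp hq
    obtain ⟨hp1, hp2, hp3⟩ := hp
    obtain ⟨hq1, hq2, hq3⟩ := hq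
    have h1 : (n:ℤ) - k + l1 = (n:ℤ) - k + l2 := congrArg Prod.fst heq
    have h2 : gIdx k j1 = gIdx k j2 := congrArg Prod.snd heq
    rw [gIdx_eq k j1 (by omega), gIdx_eq k j2 (by omega), Fin.mk_eq_mk] at h2
    have hl : l1 = l2 := by omega
    simp only [Prod.mk.injEq]
    exact ⟨hl, h2⟩
  · -- set equality
    ext p
    simp only [Set.mem_setOf_eq, Set.mem_image, Finset.mem_coe]
    constructor
    · rintro ⟨⟨i, hij, hsi⟩, hms⟩
      have hi0 : i.val ≠ 0 := by
        have h' : p.2.val < i.val := hij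
        omega
      obtain ⟨l, hl1, hl2, hc⟩ := minPartB_cases n k i hi0
      rcases hc with ⟨hv, he⟩ | ⟨hv, he⟩
      · exfalso
        rw [he, Finset.mem_singleton] at hsi
        have h1 := mB_nonneg (minPartB n k) p.2
        omega
      · rw [he, Finset.mem_singleton] at hsi
        have hji : p.2.val < i.val := hij
        refine ⟨(l, p.2.val), mem_Fpairs.mpr ⟨hl1, hl2, by omega⟩, ?_⟩
        have hc2 : gIdx k p.2.val = p.2 :=
          (gIdx_eq k p.2.val p.2.isLt).trans (Fin.eta p.2 p.2.isLt)
        simp only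
        rw [hc2, ← hsi]
    · rintro ⟨⟨l, j0⟩, hp, rfl⟩
      rw [mem_Fpairs] at hp
      obtain ⟨hl1, hl2, hj⟩ := hp
      simp only [Set.mem_setOf_eq]
      rw [gIdx_eq k j0 (by omega)]
      constructor
      · refine ⟨⟨2*l, by omega⟩, Fin.mk_lt_mk.mpr hj, ?_⟩
        rw [minPartB_even n k l hl1 (by omega)]
        exact Finset.mem_singleton_self _
      · rcases Nat.even_or_odd j0 with ⟨i, hi⟩ | ⟨i, hi⟩
        · have e : (⟨j0, by omega⟩ : Fin (2*k+1)) = ⟨2*i, by omega⟩ :=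
            Fin.mk_eq_mk.mpr (by omega)
          rw [e, mB_minPartB_even n k hk i (by omega)]
          by_cases h0 : i = 0
          · rw [if_pos h0]
            push_cast
            omega
          · rw [if_neg h0]
            push_cast
            omega
        · have e : (⟨j0, by omega⟩ : Fin (2*k+1)) = ⟨2*(i+1)-1, by omega⟩ :=
            Fin.mk_eq_mk.mpr (by omega)
          rw [e, mB_minPartB_odd n k hk (i+1) (by omega) (by omega)]
          push_cast
          omega

/-- los_{B'}(ρ) ≥ k(k+1) for every standard type B partition ρ of ⟨n⟩
with 2k+1 blocks, and the minimum is attained by the partition minPartB. -/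
theorem stmt19 (n k : ℕ) (hk : k ≤ n) :
    (∀ S : Fin (2*k+1) → Finset ℤ, IsStandardB n k S → k*(k+1) ≤ losB' S) ∧
    IsStandardB n k (minPartB n k) ∧ losB' (minPartB n k) = k*(k+1) :=
  ⟨fun S hS => stmt19_lower n k S hS, minPartB_standard n k hk, losB'_minPartB n k hk⟩
end
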